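/- Let A, B, B₁ : [0,T] → ℝ^{n×n}, ℝ^{n×m}, ℝ^{n×p} be continuous matrix functions. Suppose Π : [0,T] → ℝ^{n×n} is differentiable, symmetric-matrix valued, and satisfies the Riccati equation Π̇(t) = −A(t)ᵀΠ(t) − Π(t)A(t) + Π(t)B(t)B(t)ᵀΠ(t), and suppose Σ : [0,T] → ℝ^{n×n} is differentiable, symmetric-matrix valued, invertible for every t, and satisfies Σ̇(t) = (A(t) − B(t)B(t)ᵀΠ(t))Σ(t) + Σ(t)(A(t) − B(t)B(t)ᵀΠ(t))ᵀ + B₁(t)B₁(t)ᵀ. Then H(t) := Σ(t)⁻¹ − Π(t) satisfies Ḣ(t) = −A(t)ᵀH(t) − H(t)A(t) − H(t)B(t)B(t)ᵀH(t) + (Π(t) + H(t))(B(t)B(t)ᵀ − B₁(t)B₁(t)ᵀ)(Π(t) + H(t)) for all t ∈ [0,T]. -/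

import Mathlib

open Matrix

/-- The controllability matrix `[B, AB, A²B, …, A^{n−1}B]` (columns indexed by `Fin n × Fin m`). -/
def ctrbMatrix {n m : ℕ} (A : Matrix (Fin n) (Fin n) ℝ) (B : Matrix (Fin n) (Fin m) ℝ) :
    Matrix (Fin n) (Fin n × Fin m) ℝ :=
  Matrix.of fun i p => ((A ^ (p.1 : ℕ)) * B) i p.2

/-- `(A,B)` is a controllable pair iff the controllability matrix has rank `n`. -/
def IsControllablePair {n m : ℕ} (A : Matrix (Fin n) (Fin n) ℝ)
    (B : Matrix (Fin n) (Fin m) ℝ) : Prop :=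
  (ctrbMatrix A B).rank = n

/-- A real square matrix is Hurwitz iff all its (complex) eigenvalues have negative real part. -/
def IsHurwitz {n : ℕ} (F : Matrix (Fin n) (Fin n) ℝ) : Prop :=
  ∀ μ ∈ spectrum ℂ (F.map (algebraMap ℝ ℂ)), μ.re < 0

section Aux

attribute [local instance] Matrix.linftyOpNormedRing Matrix.linftyOpNormedAlgebra

variable {N : ℕ}

lemma aux_hasDerivAt_matrix {f : ℝ → Matrix (Fin N) (Fin N) ℝ}
    {f' : Matrix (Fin N) (Fin N) ℝ} {t : ℝ}
    (h : ∀ i j, HasDerivAt (fun s => f s i j) (f' i j) t) :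
    HasDerivAt f f' t := by
  have key : HasDerivAt (fun s => ∑ i : Fin N, ∑ j : Fin N,
      Matrix.single i j (f s i j))
      (∑ i : Fin N, ∑ j : Fin N, Matrix.single i j (f' i j)) t := by
    refine HasDerivAt.fun_sum fun i _ => HasDerivAt.fun_sum fun j _ => ?_
    have h2 := (h i j).smul_const (Matrix.single i j (1:ℝ))
    simpa [Matrix.smul_single] using h2
  have e1 : (fun s => ∑ i : Fin N, ∑ j : Fin N, Matrix.single i j (f s i j)) = f := by
    funext s; exact (Matrix.matrix_eq_sum_single (f s)).symm
  rw [e1] at key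
  rwa [← Matrix.matrix_eq_sum_single] at key

lemma aux_entry {f : ℝ → Matrix (Fin N) (Fin N) ℝ} {f' : Matrix (Fin N) (Fin N) ℝ} {t : ℝ}
    (h : HasDerivAt f f' t) (i j : Fin N) :
    HasDerivAt (fun s => f s i j) (f' i j) t := by
  let L : Matrix (Fin N) (Fin N) ℝ →ₗ[ℝ] ℝ :=
    { toFun := fun M => M i j, map_add' := fun _ _ => rfl, map_smul' := fun _ _ => rfl }
  exact L.toContinuousLinearMap.hasFDerivAt.comp_hasDerivAt t h

lemma aux_inv {f : ℝ → Matrix (Fin N) (Fin N) ℝ} {f' : Matrix (Fin N) (Fin N) ℝ} {t : ℝ}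
    (h : HasDerivAt f f' t) (hdet : IsUnit (f t).det) :
    HasDerivAt (fun s => (f s)⁻¹) (-((f t)⁻¹ * f' * (f t)⁻¹)) t := by
  haveI : CompleteSpace (Matrix (Fin N) (Fin N) ℝ) := FiniteDimensional.complete ℝ _
  obtain ⟨u, hu⟩ := (Matrix.isUnit_iff_isUnit_det _).mpr hdet
  have hd := hasFDerivAt_ringInverse (𝕜 := ℝ) u
  rw [hu] at hd
  have hcomp := hd.comp_hasDerivAt t h
  have hinv : (↑u⁻¹ : Matrix (Fin N) (Fin N) ℝ) = (f t)⁻¹ := by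
    rw [Matrix.nonsing_inv_eq_ringInverse, ← hu, Ring.inverse_unit]
  have heq : (fun s => Ring.inverse (f s)) = fun s => (f s)⁻¹ := by
    funext s; rw [Matrix.nonsing_inv_eq_ringInverse]
  rw [show Ring.inverse ∘ f = fun s => (f s)⁻¹ from funext fun s => Matrix.nonsing_inv_eq_ringInverse (f s) ▸ rfl] at hcomp
  simp [hinv, mul_assoc] at hcomp
  rw [mul_assoc]
  exact hcomp

end Aux

section Main

attribute [local instance] Matrix.linftyOpNormedRing Matrix.linftyOpNormedAlgebra

/-- if `Π(t)` solves the Riccati equation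
`Π̇ = −AᵀΠ − ΠA + ΠBBᵀΠ` and `Σ(t)` (symmetric, invertible) solves
`Σ̇ = (A−BBᵀΠ)Σ + Σ(A−BBᵀΠ)ᵀ + B₁B₁ᵀ`, then `H := Σ⁻¹ − Π` satisfies
`Ḣ = −AᵀH − HA − HBBᵀH + (Π+H)(BBᵀ−B₁B₁ᵀ)(Π+H)` on `[0,T]`.
All derivatives/continuity are entrywise. -/
theorem stmt5 {n m p : ℕ} (T : ℝ)
    (A : ℝ → Matrix (Fin n) (Fin n) ℝ) (B : ℝ → Matrix (Fin n) (Fin m) ℝ)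
    (B₁ : ℝ → Matrix (Fin n) (Fin p) ℝ)
    (hA : ∀ i j, ContinuousOn (fun t => A t i j) (Set.Icc 0 T))
    (hB : ∀ i j, ContinuousOn (fun t => B t i j) (Set.Icc 0 T))
    (hB₁ : ∀ i j, ContinuousOn (fun t => B₁ t i j) (Set.Icc 0 T))
    (P : ℝ → Matrix (Fin n) (Fin n) ℝ) (S : ℝ → Matrix (Fin n) (Fin n) ℝ)
    (hPsym : ∀ t ∈ Set.Icc (0:ℝ) T, (P t).IsSymm)
    (hSsym : ∀ t ∈ Set.Icc (0:ℝ) T, (S t).IsSymm)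
    (hSinv : ∀ t ∈ Set.Icc (0:ℝ) T, IsUnit (S t).det)
    (hP : ∀ t ∈ Set.Icc (0:ℝ) T, ∀ i j, HasDerivAt (fun s => P s i j)
      ((-(A t)ᵀ * P t - P t * A t + P t * (B t * (B t)ᵀ) * P t) i j) t)
    (hS : ∀ t ∈ Set.Icc (0:ℝ) T, ∀ i j, HasDerivAt (fun s => S s i j)
      (((A t - B t * (B t)ᵀ * P t) * S t + S t * (A t - B t * (B t)ᵀ * P t)ᵀ
        + B₁ t * (B₁ t)ᵀ) i j) t) :
    ∀ t ∈ Set.Icc (0:ℝ) T, ∀ i j,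
      HasDerivAt (fun s => ((S s)⁻¹ - P s) i j)
        ((-(A t)ᵀ * ((S t)⁻¹ - P t) - ((S t)⁻¹ - P t) * A t
          - ((S t)⁻¹ - P t) * (B t * (B t)ᵀ) * ((S t)⁻¹ - P t)
          + (P t + ((S t)⁻¹ - P t)) * (B t * (B t)ᵀ - B₁ t * (B₁ t)ᵀ)
            * (P t + ((S t)⁻¹ - P t))) i j) t := by
  intro t ht i j
  have hPd : HasDerivAt P (-(A t)ᵀ * P t - P t * A t + P t * (B t * (B t)ᵀ) * P t) t :=
    aux_hasDerivAt_matrix (hP t ht)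
  have hSd : HasDerivAt S ((A t - B t * (B t)ᵀ * P t) * S t
      + S t * (A t - B t * (B t)ᵀ * P t)ᵀ + B₁ t * (B₁ t)ᵀ) t :=
    aux_hasDerivAt_matrix (hS t ht)
  have hInv := aux_inv hSd (hSinv t ht)
  have hH := hInv.sub hPd
  have h1 : (S t)⁻¹ * S t = 1 := Matrix.nonsing_inv_mul _ (hSinv t ht)
  have h2 : S t * (S t)⁻¹ = 1 := Matrix.mul_nonsing_inv _ (hSinv t ht)
  have hPt : (P t)ᵀ = P t := (hPsym t ht)
  have hFt : (A t - B t * (B t)ᵀ * P t)ᵀ = (A t)ᵀ - P t * (B t * (B t)ᵀ) := by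
    rw [Matrix.transpose_sub, Matrix.transpose_mul, Matrix.transpose_mul,
      Matrix.transpose_transpose, hPt]
  have c1 : (S t)⁻¹ * ((A t - B t * (B t)ᵀ * P t) * S t) * (S t)⁻¹
      = (S t)⁻¹ * (A t - B t * (B t)ᵀ * P t) := by
    rw [mul_assoc, mul_assoc, h2, mul_one]
  have c2 : (S t)⁻¹ * (S t * (A t - B t * (B t)ᵀ * P t)ᵀ) * (S t)⁻¹
      = (A t - B t * (B t)ᵀ * P t)ᵀ * (S t)⁻¹ := by
    rw [← mul_assoc, h1, one_mul]
  have key : -((S t)⁻¹ * ((A t - B t * (B t)ᵀ * P t) * S t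
        + S t * (A t - B t * (B t)ᵀ * P t)ᵀ + B₁ t * (B₁ t)ᵀ) * (S t)⁻¹)
      - (-(A t)ᵀ * P t - P t * A t + P t * (B t * (B t)ᵀ) * P t)
      = -(A t)ᵀ * ((S t)⁻¹ - P t) - ((S t)⁻¹ - P t) * A t
          - ((S t)⁻¹ - P t) * (B t * (B t)ᵀ) * ((S t)⁻¹ - P t)
          + (P t + ((S t)⁻¹ - P t)) * (B t * (B t)ᵀ - B₁ t * (B₁ t)ᵀ)
            * (P t + ((S t)⁻¹ - P t)) := by
    rw [Matrix.mul_add, Matrix.mul_add, Matrix.add_mul, Matrix.add_mul, c1, c2, hFt]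
    noncomm_ring
  have h3 := aux_entry hH i j
  rw [key] at h3
  exact h3

end Main
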